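/- Fix a finite index set I, a generalized Cartan matrix (C_{i,j}) of finite type with symmetrizers r_i ≥ 1, a dominant monomial M : I × ℤ → ℕ (finitely supported) and K ∈ ℤ. Let a_{i,l} : I × ℤ → ℤ be the exponent function of A_{i,l}^{−1} as above (values −1 at (i, l±r_i), +1 at (j, l+k) for j ≠ i, C_{j,i} < 0, k ∈ {C_{j,i}+1, C_{j,i}+3, …, −C_{j,i}−1}, and 0 elsewhere). Assume each a_{i,l} is right negative with maximal occurring second coordinate l + r_i (which holds in finite type). Then the set of dominant monomials of the form M + a_{i_1,l_1} + ⋯ + a_{i_R,l_R} with R ≥ 0 and all l_1, …, l_R ≥ K is finite. -/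
import Mathlib


/-- The exponent function of `A_{i,l}⁻¹`. -/
def aFun {I : Type*} [DecidableEq I] (C : I → I → ℤ) (r : I → ℤ) (i : I) (l : ℤ) :
    I × ℤ → ℤ := fun p =>
  (if p.1 = i ∧ (p.2 = l - r i ∨ p.2 = l + r i) then -1 else 0) +
    (if p.1 ≠ i ∧ C p.1 i < 0 ∧ C p.1 i + 1 ≤ p.2 - l ∧ p.2 - l ≤ -C p.1 i - 1 ∧
        (p.2 - l - (C p.1 i + 1)) % 2 = 0 then 1 else 0)

/-- Given a dominant monomial `M` and `K ∈ ℤ`, assuming every `aFun C d i l` is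
right negative with maximal occurring second coordinate `l + dᵢ`, the set of
dominant monomials of the form `M · A_{i₁,l₁}⁻¹ ⋯ A_{i_R,l_R}⁻¹` with all
`l_r ≥ K` is finite. -/
theorem finite_dominant_below (I : Type*) [Fintype I] [DecidableEq I]
    (C : I → I → ℤ) (d : I → ℤ)
    (hdiag : ∀ i, C i i = 2)
    (hoff : ∀ i j, i ≠ j → C i j ≤ 0)
    (hzero : ∀ i j, C i j = 0 ↔ C j i = 0)
    (hd : ∀ i, 1 ≤ d i)
    (hrn : ∀ (i : I) (l : ℤ),
      aFun C d i l (i, l + d i) ≠ 0 ∧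
      (∀ (j : I) (k : ℤ), aFun C d i l (j, k) ≠ 0 → k ≤ l + d i) ∧
      (∀ j : I, aFun C d i l (j, l + d i) ≤ 0))
    (M : (I × ℤ) →₀ ℕ) (K : ℤ) :
    {m : I × ℤ → ℤ |
      (∀ p : I × ℤ, 0 ≤ m p) ∧
      ∃ (R : ℕ) (ii : Fin R → I) (ll : Fin R → ℤ),
        (∀ t : Fin R, K ≤ ll t) ∧
        m = fun p => (M p : ℤ) + ∑ t : Fin R, aFun C d (ii t) (ll t) p}.Finite := by
  classical
  -- basic facts about aFun
  have haFun_le_one : ∀ (i : I) (l : ℤ) (j : I) (k : ℤ), aFun C d i l (j, k) ≤ 1 := by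
    intro i l j k
    unfold aFun
    split_ifs <;> norm_num
  have haFun_top : ∀ (i : I) (l : ℤ), aFun C d i l (i, l + d i) = -1 := by
    intro i l
    simp [aFun]
  have haux_le : ∀ (i : I) (l : ℤ) (j : I) (k : ℤ), l + d i ≤ k →
      aFun C d i l (j, k) ≤ 0 := by
    intro i l j k hk
    by_contra h
    push_neg at h
    have hne : aFun C d i l (j, k) ≠ 0 := by omega
    have h1 := (hrn i l).2.1 j k hne
    have hkk : k = l + d i := le_antisymm h1 hk
    have h2 := (hrn i l).2.2 j
    rw [hkk] at h
    omega
  set L0 : ℤ := ((M.support.sup fun p => p.2.toNat : ℕ) : ℤ) with hL0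
  have hM0 : ∀ p : I × ℤ, L0 < p.2 → M p = 0 := by
    intro p hp
    by_contra h
    have hmem : p ∈ M.support := Finsupp.mem_support_iff.mpr h
    have h1 : p.2.toNat ≤ M.support.sup fun p => p.2.toNat :=
      Finset.le_sup (f := fun p : I × ℤ => p.2.toNat) hmem
    have h2 : p.2 ≤ (p.2.toNat : ℤ) := Int.self_le_toNat _
    omega
  -- Step 1: all layers are bounded by L0
  have hstep1 : ∀ (R : ℕ) (ii : Fin R → I) (ll : Fin R → ℤ),
      (∀ p : I × ℤ, (0:ℤ) ≤ (M p : ℤ) + ∑ t : Fin R, aFun C d (ii t) (ll t) p) →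
      ∀ t : Fin R, ll t + d (ii t) ≤ L0 := by
    intro R ii ll hpos t0
    by_contra hc
    push_neg at hc
    obtain ⟨t, -, ht⟩ := Finset.exists_max_image (Finset.univ : Finset (Fin R))
      (fun s => ll s + d (ii s)) ⟨t0, Finset.mem_univ t0⟩
    have hΛ0 : L0 < ll t + d (ii t) := lt_of_lt_of_le hc (ht t0 (Finset.mem_univ t0))
    have h1 := hpos (ii t, ll t + d (ii t))
    have h2 : M (ii t, ll t + d (ii t)) = 0 := hM0 _ hΛ0
    have h4 : aFun C d (ii t) (ll t) (ii t, ll t + d (ii t)) = -1 := haFun_top _ _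
    have h5 : ∑ s ∈ Finset.univ.erase t,
        aFun C d (ii s) (ll s) (ii t, ll t + d (ii t)) ≤ 0 :=
      Finset.sum_nonpos fun s _ => haux_le _ _ _ _ (ht s (Finset.mem_univ s))
    have h3 : ∑ s : Fin R, aFun C d (ii s) (ll s) (ii t, ll t + d (ii t)) ≤ -1 := by
      rw [← Finset.add_sum_erase _
        (fun s => aFun C d (ii s) (ll s) (ii t, ll t + d (ii t))) (Finset.mem_univ t)]
      omega
    rw [h2] at h1
    push_cast at h1
    omega
  -- the finite box and weights
  set T : Finset (I × ℤ) := Finset.univ ×ˢ Finset.Icc K L0 with hT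
  set B : ℤ := (T.card : ℤ) + 1 with hB
  have hB1 : (1:ℤ) ≤ B := by
    have := T.card.cast_nonneg (α := ℤ)
    omega
  -- Step 2: each aFun has weighted sum ≤ -1
  have hphiA : ∀ (i : I) (l : ℤ), K ≤ l → l + d i ≤ L0 →
      ∑ p ∈ T, B ^ ((p.2 - K).toNat) * aFun C d i l p ≤ -1 := by
    intro i l hKl hlL
    have hdi := hd i
    have hqT : ((i, l + d i) : I × ℤ) ∈ T := by
      simp only [hT, Finset.mem_product, Finset.mem_univ, true_and, Finset.mem_Icc]
      omega
    obtain ⟨e, he⟩ : ∃ e, (l + d i - K).toNat = e + 1 :=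
      ⟨(l + d i - K).toNat - 1, by omega⟩
    have hterm : ∀ p ∈ T.erase (i, l + d i),
        B ^ ((p.2 - K).toNat) * aFun C d i l p ≤ B ^ e := by
      rintro ⟨j, k⟩ hp
      have hpT := Finset.mem_of_mem_erase hp
      have hpK : K ≤ k ∧ k ≤ L0 := by
        simpa only [hT, Finset.mem_product, Finset.mem_univ, true_and,
          Finset.mem_Icc] using hpT
      have hwpos : (0:ℤ) < B ^ ((k - K).toNat) := pow_pos (by omega) _
      rcases le_or_gt (aFun C d i l (j, k)) 0 with h0 | h0
      · have : B ^ (((j, k) : I × ℤ).2 - K).toNat * aFun C d i l (j, k) ≤ 0 :=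
          mul_nonpos_of_nonneg_of_nonpos (le_of_lt hwpos) h0
        have hBe : (0:ℤ) ≤ B ^ e := pow_nonneg (by omega) _
        omega
      · have h1 : aFun C d i l (j, k) = 1 := le_antisymm (haFun_le_one _ _ _ _) h0
        have hne : aFun C d i l (j, k) ≠ 0 := by omega
        have hle := (hrn i l).2.1 j k hne
        have h4 : ¬ (l + d i ≤ k) := by
          intro hcc
          have := haux_le i l j k hcc
          omega
        have h5 : (k - K).toNat ≤ e := by omega
        calc B ^ (((j, k) : I × ℤ).2 - K).toNat * aFun C d i l (j, k)
            = B ^ ((k - K).toNat) := by rw [h1, mul_one]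
          _ ≤ B ^ e := pow_le_pow_right₀ hB1 h5
    have h6 := Finset.sum_le_card_nsmul (T.erase (i, l + d i)) _ (B ^ e) hterm
    rw [Finset.card_erase_of_mem hqT, nsmul_eq_mul] at h6
    have hc1 : 1 ≤ T.card := Finset.card_pos.mpr ⟨_, hqT⟩
    have hc2 : ((T.card - 1 : ℕ) : ℤ) = (T.card : ℤ) - 1 := by omega
    rw [hc2] at h6
    have hq1 : B ^ ((((i, l + d i) : I × ℤ).2 - K).toNat) * aFun C d i l (i, l + d i)
        = -B ^ (e + 1) := by
      rw [haFun_top i l]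
      have : (((i, l + d i) : I × ℤ).2 - K).toNat = e + 1 := he
      rw [this]
      ring
    rw [← Finset.add_sum_erase _
      (fun p => B ^ ((p.2 - K).toNat) * aFun C d i l p) hqT]
    have hpe : (1:ℤ) ≤ B ^ e := one_le_pow₀ hB1
    have hps : B ^ (e + 1) = B ^ e * B := pow_succ B e
    simp only
    rw [hq1]
    nlinarith [h6, hpe, hps]
  -- Step 3: R is bounded
  set N : ℤ := ∑ p ∈ T, B ^ ((p.2 - K).toNat) * (M p : ℤ) with hN
  have hRbound : ∀ (R : ℕ) (ii : Fin R → I) (ll : Fin R → ℤ),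
      (∀ t, K ≤ ll t) →
      (∀ p : I × ℤ, (0:ℤ) ≤ (M p : ℤ) + ∑ t : Fin R, aFun C d (ii t) (ll t) p) →
      (R : ℤ) ≤ N := by
    intro R ii ll hKll hpos
    have h1 : ∀ t, ll t + d (ii t) ≤ L0 := hstep1 R ii ll hpos
    have h2 : (0:ℤ) ≤ ∑ p ∈ T, B ^ ((p.2 - K).toNat) *
        ((M p : ℤ) + ∑ t : Fin R, aFun C d (ii t) (ll t) p) :=
      Finset.sum_nonneg fun p _ =>
        mul_nonneg (pow_nonneg (by omega) _) (hpos p)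
    have h3 : ∑ p ∈ T, B ^ ((p.2 - K).toNat) *
        ((M p : ℤ) + ∑ t : Fin R, aFun C d (ii t) (ll t) p)
        = N + ∑ t : Fin R, ∑ p ∈ T, B ^ ((p.2 - K).toNat) *
            aFun C d (ii t) (ll t) p := by
      rw [hN]
      simp only [mul_add, Finset.mul_sum]
      rw [Finset.sum_add_distrib]
      congr 1
      exact Finset.sum_comm
    have h4 : ∑ t : Fin R, ∑ p ∈ T, B ^ ((p.2 - K).toNat) *
        aFun C d (ii t) (ll t) p ≤ ∑ _t : Fin R, (-1 : ℤ) :=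
      Finset.sum_le_sum fun t _ => hphiA (ii t) (ll t) (hKll t) (h1 t)
    have h5 : ∑ _t : Fin R, (-1 : ℤ) = -(R : ℤ) := by
      simp
    rw [h3] at h2
    rw [h5] at h4
    linarith
  -- Step 4: conclude finiteness
  refine Set.Finite.subset (Set.Finite.biUnion
    (Finset.range (N.toNat + 1)).finite_toSet
    (fun R _ => Set.Finite.image
      (fun f : Fin R → I × ℤ =>
        (fun p => (M p : ℤ) + ∑ t : Fin R, aFun C d (f t).1 (f t).2 p))
      (Set.Finite.pi' fun _ : Fin R => T.finite_toSet))) ?_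
  rintro m ⟨hdom, R, ii, ll, hKll, rfl⟩
  have hpos : ∀ p : I × ℤ, (0:ℤ) ≤ (M p : ℤ) +
      ∑ t : Fin R, aFun C d (ii t) (ll t) p := fun p => hdom p
  have h1 : ∀ t, ll t + d (ii t) ≤ L0 := hstep1 R ii ll hpos
  have h2 : (R : ℤ) ≤ N := hRbound R ii ll hKll hpos
  have hmemT : ∀ t : Fin R, ((ii t, ll t) : I × ℤ) ∈ (T : Set (I × ℤ)) := by
    intro t
    have hdi := hd (ii t)
    have h3 := hKll t
    have h4 := h1 t
    refine Finset.mem_coe.mpr ?_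
    simp only [hT, Finset.mem_product, Finset.mem_univ, true_and, Finset.mem_Icc]
    omega
  exact Set.mem_biUnion (Finset.mem_coe.mpr (Finset.mem_range.mpr (by omega)))
    ⟨fun t => (ii t, ll t), fun t => hmemT t, rfl⟩
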